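/- Let R be an n×m complex matrix with m ≥ n whose rows are unit vectors in the Euclidean norm, D = diag(σ₁,…,σ_n) with σ_i ≥ 0, and B(k) the n×n cyclic column submatrices of R. Then Σ_{k=1}^m ‖D B(k) D‖_* ≤ √m · (Σ_{k=1}^n σ_k)². -/

import Mathlib

open Matrix Complex Finset

/-- The nuclear (Schatten-1, trace) norm: the sum of the singular values. -/
noncomputable def nuclearNorm {n m : ℕ} (A : Matrix (Fin n) (Fin m) ℂ) : ℝ :=
  ∑ j, Real.sqrt ((Matrix.isHermitian_conjTranspose_mul_self A).eigenvalues j)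

/-- The `n×n` submatrix of an `n×m` matrix `R` formed by `n` cyclically
consecutive columns starting after column `k` (indices mod `m`). -/
def cycSub {n m : ℕ} (R : Matrix (Fin n) (Fin m) ℂ) (k : Fin m) :
    Matrix (Fin n) (Fin n) ℂ :=
  Matrix.of fun i j => R i ⟨(j.val + k.val) % m, Nat.mod_lt _ k.pos⟩

lemma cauchy_schwarz_abs {n : ℕ} (a b : Fin n → ℂ) :
    ‖∑ j, a j * b j‖ ≤
      Real.sqrt (∑ j, Complex.normSq (a j)) * Real.sqrt (∑ j, Complex.normSq (b j)) := by
  have h1 : ‖∑ j, a j * b j‖ ≤ ∑ j, ‖a j‖ * ‖b j‖ := by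
    refine le_trans (norm_sum_le _ _) (le_of_eq ?_)
    exact Finset.sum_congr rfl fun j _ => norm_mul _ _
  refine h1.trans ?_
  have h2 := Real.sum_mul_le_sqrt_mul_sqrt Finset.univ
    (fun j => ‖a j‖) (fun j => ‖b j‖)
  simpa [Complex.sq_norm] using h2

lemma nuclearNorm_le_sum_abs {n : ℕ} (A : Matrix (Fin n) (Fin n) ℂ) :
    nuclearNorm A ≤ ∑ i, ∑ j, ‖A i j‖ := by
  have hH := Matrix.isHermitian_conjTranspose_mul_self A
  set lam := hH.eigenvalues with hlam
  have hlam0 : ∀ j, 0 ≤ lam j := fun j =>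
    Matrix.eigenvalues_conjTranspose_mul_self_nonneg A j
  set V : Matrix (Fin n) (Fin n) ℂ := (hH.eigenvectorUnitary : Matrix (Fin n) (Fin n) ℂ) with hV
  set C := A * V with hC
  have F1 : Cᴴ * C = Matrix.diagonal (fun j => ((lam j : ℝ) : ℂ)) := by
    have h : star V * (Aᴴ * A) * V = Matrix.diagonal (RCLike.ofReal ∘ hH.eigenvalues) := by
      have h0 := hH.conjStarAlgAut_star_eigenvectorUnitary
      rw [Unitary.conjStarAlgAut_star_apply] at h0
      exact h0
    rw [hC, conjTranspose_mul, ← Matrix.star_eq_conjTranspose V]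
    calc Vᴴ * Aᴴ * (A * V) = star V * (Aᴴ * A) * V := by
          rw [Matrix.star_eq_conjTranspose]; noncomm_ring
      _ = Matrix.diagonal (fun j => ((lam j : ℝ) : ℂ)) := by rw [h]; rfl
  have F1' : ∀ j j', ∑ i, (starRingEnd ℂ) (C i j) * C i j' =
      if j = j' then ((lam j : ℝ) : ℂ) else 0 := by
    intro j j'
    have := congrFun (congrFun F1 j) j'
    simpa [Matrix.mul_apply, Matrix.conjTranspose_apply, Matrix.diagonal_apply] using this
  have F2 : ∀ l, ∑ j, Complex.normSq (V l j) = 1 := by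
    have hVV : V * Vᴴ = 1 := by
      rw [← Matrix.star_eq_conjTranspose]
      exact (Matrix.mem_unitaryGroup_iff).mp hH.eigenvectorUnitary.2
    intro l
    have := congrFun (congrFun hVV l) l
    simp only [Matrix.mul_apply, Matrix.conjTranspose_apply, Matrix.one_apply_eq] at this
    have : ((∑ j, Complex.normSq (V l j) : ℝ) : ℂ) = 1 := by
      push_cast
      simpa [Complex.mul_conj] using this
    exact_mod_cast this
  -- the aligned dual vectors
  set u : Fin n → Fin n → ℂ :=
    fun i j => if lam j = 0 then 0 else C i j / ((Real.sqrt (lam j) : ℝ) : ℂ) with hu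
  -- column orthogonality of u
  have OU : ∀ j j', ∑ i, (starRingEnd ℂ) (u i j) * u i j' =
      if j = j' ∧ lam j ≠ 0 then 1 else 0 := by
    intro j j'
    by_cases h : lam j = 0
    · simp [hu, h]
    by_cases h' : lam j' = 0
    · have hne : ¬(j = j' ∧ lam j ≠ 0) := by rintro ⟨rfl, hc⟩; exact hc h'
      simp [hu, h', hne]
    have : ∑ i, (starRingEnd ℂ) (u i j) * u i j' =
        (∑ i, (starRingEnd ℂ) (C i j) * C i j') /
          (((Real.sqrt (lam j) : ℝ) : ℂ) * ((Real.sqrt (lam j') : ℝ) : ℂ)) := by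
      rw [Finset.sum_div]
      refine Finset.sum_congr rfl fun i _ => ?_
      simp only [hu, if_neg h, if_neg h', map_div₀, Complex.conj_ofReal]
      field_simp
    rw [this, F1']
    by_cases hjj : j = j'
    · subst hjj
      rw [if_pos rfl, if_pos ⟨rfl, h⟩]
      rw [← Complex.ofReal_mul, Real.mul_self_sqrt (hlam0 j)]
      exact div_self (by exact_mod_cast h)
    · rw [if_neg hjj, if_neg (by tauto), zero_div]
  -- row norms of u are at most 1
  have ht : ∀ i, ∑ j, Complex.normSq (u i j) ≤ 1 := by
    intro i
    set t := ∑ j, Complex.normSq (u i j) with hts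
    have ht0 : 0 ≤ t := Finset.sum_nonneg fun j _ => Complex.normSq_nonneg _
    set z : Fin n → ℂ := fun i' => ∑ j, u i' j * (starRingEnd ℂ) (u i j) with hz
    have hzi : z i = (t : ℂ) := by
      simp [hz, hts, Complex.mul_conj]
    have inner : ∀ j j', (∑ i', u i' j * (starRingEnd ℂ) (u i' j')) =
        if j = j' ∧ lam j ≠ 0 then 1 else 0 := by
      intro j j'
      calc ∑ i', u i' j * (starRingEnd ℂ) (u i' j')
          = (starRingEnd ℂ) (∑ i', (starRingEnd ℂ) (u i' j) * u i' j') := by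
            simp [map_sum, _root_.map_mul, mul_comm]
        _ = _ := by rw [OU j j']; split <;> simp
    have key : ∑ i', z i' * (starRingEnd ℂ) (z i') =
        ∑ j, (if lam j = 0 then (0:ℂ) else 1) * ((Complex.normSq (u i j) : ℝ) : ℂ) := by
      calc ∑ i', z i' * (starRingEnd ℂ) (z i')
          = ∑ i', ∑ j, ∑ j', (u i' j * (starRingEnd ℂ) (u i j)) *
              ((starRingEnd ℂ) (u i' j') * u i j') := by
            refine Finset.sum_congr rfl fun i' _ => ?_
            simp only [hz, map_sum, Finset.sum_mul_sum]
            exact Finset.sum_congr rfl fun j _ => Finset.sum_congr rfl fun j' _ => by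
              rw [_root_.map_mul, Complex.conj_conj]
        _ = ∑ j, ∑ j', ((starRingEnd ℂ) (u i j) * u i j') *
              ∑ i', u i' j * (starRingEnd ℂ) (u i' j') := by
            rw [Finset.sum_comm]
            refine Finset.sum_congr rfl fun j _ => ?_
            rw [Finset.sum_comm]
            refine Finset.sum_congr rfl fun j' _ => ?_
            rw [Finset.mul_sum]
            exact Finset.sum_congr rfl fun i' _ => by ring
        _ = ∑ j, (if lam j = 0 then (0:ℂ) else 1) * ((Complex.normSq (u i j) : ℝ) : ℂ) := by
            refine Finset.sum_congr rfl fun j _ => ?_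
            simp only [inner]
            have : ∀ j' : Fin n, ((starRingEnd ℂ) (u i j) * u i j') *
                (if j = j' ∧ lam j ≠ 0 then (1:ℂ) else 0) =
                if j = j' then ((starRingEnd ℂ) (u i j) * u i j') *
                  (if lam j = 0 then 0 else 1) else 0 := by
              intro j'
              by_cases hjj : j = j'
              · subst hjj; by_cases hl : lam j = 0 <;> simp [hl]
              · simp [hjj]
            rw [Finset.sum_congr rfl fun j' _ => this j', Finset.sum_ite_eq]
            simp only [Finset.mem_univ, if_true]
            by_cases hl : lam j = 0
            · simp [hl]
            · simp only [if_neg hl, mul_one, one_mul]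
              rw [mul_comm ((starRingEnd ℂ) (u i j)) (u i j), Complex.mul_conj]
    have keyR : ∑ i', Complex.normSq (z i') ≤ t := by
      have hcast : ((∑ i', Complex.normSq (z i') : ℝ) : ℂ) =
          ((∑ j, (if lam j = 0 then (0:ℝ) else 1) * Complex.normSq (u i j) : ℝ) : ℂ) := by
        have e1 : ((∑ i', Complex.normSq (z i') : ℝ) : ℂ) =
            ∑ i', z i' * (starRingEnd ℂ) (z i') := by
          push_cast
          exact Finset.sum_congr rfl fun i' _ => (Complex.mul_conj _).symm
        rw [e1, key]
        push_cast
        refine Finset.sum_congr rfl fun j _ => ?_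
        split <;> simp
      have hre : ∑ i', Complex.normSq (z i') =
          ∑ j, (if lam j = 0 then (0:ℝ) else 1) * Complex.normSq (u i j) :=
        Complex.ofReal_injective hcast
      rw [hre, hts]
      refine Finset.sum_le_sum fun j _ => ?_
      by_cases hl : lam j = 0 <;> simp [hl, Complex.normSq_nonneg]
    have h1 : Complex.normSq (z i) ≤ ∑ i', Complex.normSq (z i') :=
      Finset.single_le_sum (f := fun i' => Complex.normSq (z i'))
        (fun i' _ => Complex.normSq_nonneg _) (Finset.mem_univ i)
    have h2 : Complex.normSq (z i) = t ^ 2 := by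
      rw [hzi]; simp [Complex.normSq_ofReal]; ring
    nlinarith [h1.trans keyR]
  -- value of the certificate pairing
  have SB : ∀ j, ∑ i, (starRingEnd ℂ) (u i j) * C i j = ((Real.sqrt (lam j) : ℝ) : ℂ) := by
    intro j
    by_cases h : lam j = 0
    · simp [hu, h]
    · have e : ∀ i, (starRingEnd ℂ) (u i j) * C i j =
          (starRingEnd ℂ) (C i j) * C i j / ((Real.sqrt (lam j) : ℝ) : ℂ) := by
        intro i
        simp only [hu, if_neg h, map_div₀, Complex.conj_ofReal]
        ring
      rw [Finset.sum_congr rfl fun i _ => e i, ← Finset.sum_div, F1' j j, if_pos rfl,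
        ← Complex.ofReal_div, Real.div_sqrt]
  have main : ((∑ j, Real.sqrt (lam j) : ℝ) : ℂ) =
      ∑ i, ∑ l, A i l * (∑ j, (starRingEnd ℂ) (u i j) * V l j) := by
    push_cast
    calc (∑ j, ((Real.sqrt (lam j) : ℝ) : ℂ))
        = ∑ j, ∑ i, (starRingEnd ℂ) (u i j) * C i j :=
          Finset.sum_congr rfl fun j _ => (SB j).symm
      _ = ∑ i, ∑ j, (starRingEnd ℂ) (u i j) * C i j := Finset.sum_comm
      _ = ∑ i, ∑ j, ∑ l, (starRingEnd ℂ) (u i j) * (A i l * V l j) := by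
          refine Finset.sum_congr rfl fun i _ => Finset.sum_congr rfl fun j _ => ?_
          rw [hC, Matrix.mul_apply, Finset.mul_sum]
      _ = ∑ i, ∑ l, A i l * (∑ j, (starRingEnd ℂ) (u i j) * V l j) := by
          refine Finset.sum_congr rfl fun i _ => ?_
          rw [Finset.sum_comm]
          refine Finset.sum_congr rfl fun l _ => ?_
          rw [Finset.mul_sum]
          exact Finset.sum_congr rfl fun j _ => by ring
  have hcs : ∀ i l, ‖∑ j, (starRingEnd ℂ) (u i j) * V l j‖ ≤ 1 := by
    intro i l
    have h1 := cauchy_schwarz_abs (fun j => (starRingEnd ℂ) (u i j)) (fun j => V l j)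
    have h2 : ∑ j, Complex.normSq ((starRingEnd ℂ) (u i j)) = ∑ j, Complex.normSq (u i j) :=
      Finset.sum_congr rfl fun j _ => Complex.normSq_conj _
    rw [h2, F2 l, Real.sqrt_one, mul_one] at h1
    exact h1.trans (Real.sqrt_le_one.mpr (ht i))
  have hnn : nuclearNorm A = ∑ j, Real.sqrt (lam j) := rfl
  rw [hnn]
  calc ∑ j, Real.sqrt (lam j)
      = (((∑ j, Real.sqrt (lam j) : ℝ) : ℂ)).re := (Complex.ofReal_re _).symm
    _ = (∑ i, ∑ l, A i l * (∑ j, (starRingEnd ℂ) (u i j) * V l j)).re := by rw [main]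
    _ ≤ ‖∑ i, ∑ l, A i l * (∑ j, (starRingEnd ℂ) (u i j) * V l j)‖ :=
        Complex.re_le_norm _
    _ ≤ ∑ i, ∑ l, ‖A i l * (∑ j, (starRingEnd ℂ) (u i j) * V l j)‖ := by
        refine (norm_sum_le _ _).trans (Finset.sum_le_sum fun i _ => ?_)
        exact norm_sum_le _ _
    _ ≤ ∑ i, ∑ l, ‖A i l‖ := by
        refine Finset.sum_le_sum fun i _ => Finset.sum_le_sum fun l _ => ?_
        rw [norm_mul]
        calc ‖A i l‖ * ‖∑ j, (starRingEnd ℂ) (u i j) * V l j‖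
            ≤ ‖A i l‖ * 1 :=
              mul_le_mul_of_nonneg_left (hcs i l) (norm_nonneg _)
          _ = ‖A i l‖ := mul_one _

/-- For an `n×m` complex matrix `R` (`m ≥ n`) whose rows are unit
vectors, and `D = diag(σ₁,…,σₙ)` with `σᵢ ≥ 0`,
`Σₖ ‖D B(k) D‖_* ≤ √m (Σₖ σₖ)²`. -/
theorem stmt16 {n m : ℕ} (R : Matrix (Fin n) (Fin m) ℂ) (hnm : n ≤ m)
    (hrows : ∀ i, ∑ j, ‖R i j‖ ^ 2 = 1)
    (σ : Fin n → ℝ) (hσ : ∀ i, 0 ≤ σ i) :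
    ∑ k : Fin m,
        nuclearNorm (Matrix.diagonal (fun i => (σ i : ℂ)) * cycSub R k
          * Matrix.diagonal (fun i => (σ i : ℂ)))
      ≤ Real.sqrt m * (∑ i, σ i) ^ 2 := by
  rcases Nat.eq_zero_or_pos m with hm | hm
  · subst hm
    simp
  haveI : NeZero m := ⟨hm.ne'⟩
  have hrow1 : ∀ i, ∑ l, ‖R i l‖ ≤ Real.sqrt m := by
    intro i
    have h := Real.sum_mul_le_sqrt_mul_sqrt Finset.univ (fun _ => (1:ℝ))
      (fun l => ‖R i l‖)
    simpa [hrows i, Finset.card_univ] using h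
  have hentry : ∀ (k : Fin m) i j,
      ‖(Matrix.diagonal (fun i => (σ i : ℂ)) * cycSub R k
        * Matrix.diagonal (fun i => (σ i : ℂ))) i j‖
      = σ i * ‖cycSub R k i j‖ * σ j := by
    intro k i j
    rw [Matrix.mul_diagonal, Matrix.diagonal_mul, norm_mul, norm_mul]
    simp only [Complex.norm_real, Real.norm_eq_abs, _root_.abs_of_nonneg (hσ i), _root_.abs_of_nonneg (hσ j)]
  have hcyc : ∀ i (j : Fin n), ∑ k : Fin m, ‖cycSub R k i j‖
      = ∑ l, ‖R i l‖ := by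
    intro i j
    set jm : Fin m := ⟨j.val, lt_of_lt_of_le j.isLt hnm⟩ with hjm
    have e1 : ∀ k : Fin m, cycSub R k i j = R i (jm + k) := by
      intro k
      exact congrArg (R i) (Fin.ext (by simp [Fin.add_def, hjm]))
    rw [Finset.sum_congr rfl fun k _ => congrArg (‖·‖) (e1 k)]
    exact Fintype.sum_equiv (Equiv.addLeft jm) _ _ (fun k => rfl)
  have hsq : (∑ i, σ i) ^ 2 = ∑ i, ∑ j, σ i * σ j := by
    rw [sq, Finset.sum_mul_sum]
  calc ∑ k : Fin m,
        nuclearNorm (Matrix.diagonal (fun i => (σ i : ℂ)) * cycSub R k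
          * Matrix.diagonal (fun i => (σ i : ℂ)))
      ≤ ∑ k : Fin m, ∑ i, ∑ j, ‖(Matrix.diagonal (fun i => (σ i : ℂ)) * cycSub R k
          * Matrix.diagonal (fun i => (σ i : ℂ))) i j‖ :=
        Finset.sum_le_sum fun k _ => nuclearNorm_le_sum_abs _
    _ = ∑ i, ∑ j, σ i * (∑ k : Fin m, ‖cycSub R k i j‖) * σ j := by
        rw [Finset.sum_comm]
        refine Finset.sum_congr rfl fun i _ => ?_
        rw [Finset.sum_comm]
        refine Finset.sum_congr rfl fun j _ => ?_
        rw [Finset.sum_congr rfl fun k _ => hentry k i j, ← Finset.sum_mul, ← Finset.mul_sum]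
    _ = ∑ i, ∑ j, σ i * (∑ l, ‖R i l‖) * σ j := by
        refine Finset.sum_congr rfl fun i _ => Finset.sum_congr rfl fun j _ => ?_
        rw [hcyc i j]
    _ ≤ ∑ i, ∑ j, σ i * Real.sqrt m * σ j := by
        refine Finset.sum_le_sum fun i _ => Finset.sum_le_sum fun j _ => ?_
        have h1 : σ i * (∑ l, ‖R i l‖) ≤ σ i * Real.sqrt m :=
          mul_le_mul_of_nonneg_left (hrow1 i) (hσ i)
        exact mul_le_mul_of_nonneg_right h1 (hσ j)
    _ = Real.sqrt m * (∑ i, σ i) ^ 2 := by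
        rw [hsq, Finset.mul_sum]
        refine Finset.sum_congr rfl fun i _ => ?_
        rw [Finset.mul_sum]
        exact Finset.sum_congr rfl fun j _ => by ring
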